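/- Let Γ = A*_φ with C_{-1} = C_{+1} = A, so φ is an automorphism of A. Suppose the image of φ in Out(A) has finite order n, and let a_0 ∈ A be an element such that φ^n(a) = a_0 a a_0^{-1} for all a ∈ A. Then the center of Γ is the union over all integers p of the sets t^{pn} · (Fix φ ∩ a_0^p Z(A)). -/

import Mathlib

/-!
Internal characterization of the HNN extension `Γ = A*_φ`:
`A` is a subgroup of `Γ`, `t ∈ Γ` is the stable letter, `Cm = C_{-1}` and
`Cp = C_{+1}` are subgroups of `A` with `t⁻¹ Cm t = Cp` (so
`φ(c) = t⁻¹ c t` for `c ∈ Cm`), `A ∪ {t}` generates `Γ`, and Britton's lemma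
holds: a reduced word `g₀ t^{ε₁} g₁ ⋯ t^{εₙ} gₙ` with `n ≥ 1` is nontrivial.
-/

variable {Γ : Type*} [Group Γ]

theorem hnn_center_aux (A : Subgroup Γ) (t : Γ)
    (hA : ∀ c : Γ, c ∈ A ↔ t⁻¹ * c * t ∈ A)
    (hclosure : Subgroup.closure ((A : Set Γ) ∪ {t}) = ⊤)
    (n : ℕ) (hn : 0 < n) (a₀ : Γ) (ha₀ : a₀ ∈ A)
    (hinner : ∀ a ∈ A, (t ^ n)⁻¹ * a * t ^ n = a₀ * a * a₀⁻¹)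
    (hmin : ∀ m : ℕ, 0 < m → m < n →
      ¬∃ b ∈ A, ∀ a ∈ A, (t ^ m)⁻¹ * a * t ^ m = b * a * b⁻¹) :
    (Subgroup.center Γ : Set Γ) =
      {g : Γ | ∃ p : ℤ, ∃ x : Γ,
        (x ∈ A ∧ t⁻¹ * x * t = x) ∧
        (∃ z : Γ, z ∈ A ∧ (∀ a ∈ A, z * a = a * z) ∧ x = a₀ ^ p * z) ∧
        g = t ^ (p * (n : ℤ)) * x} := by
  -- conjugation by powers of t preserves A
  have hA' : ∀ c : Γ, c ∈ A → t * c * t⁻¹ ∈ A := by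
    intro c hc
    have := (hA (t * c * t⁻¹)).2
    apply this
    have e : t⁻¹ * (t * c * t⁻¹) * t = c := by group
    rw [e]; exact hc
  have conjz : ∀ (k : ℤ) (a : Γ), a ∈ A → t ^ (-k) * a * t ^ k ∈ A := by
    intro k
    induction k using Int.induction_on with
    | zero => intro a ha; simpa using ha
    | succ k ih =>
      intro a ha
      have h1 := (hA _).1 (ih a ha)
      have e : t ^ (-((k:ℤ)+1)) * a * t ^ ((k:ℤ)+1)
          = t⁻¹ * (t ^ (-(k:ℤ)) * a * t ^ (k:ℤ)) * t := by group
      rw [e]; exact h1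
    | pred k ih =>
      intro a ha
      have h1 := hA' _ (ih a ha)
      have e : t ^ (-(-(k:ℤ)-1)) * a * t ^ (-(k:ℤ)-1)
          = t * (t ^ (-(-(k:ℤ))) * a * t ^ (-(k:ℤ))) * t⁻¹ := by group
      rw [e]; exact h1
  -- every element decomposes as t^k * a
  have decomp : ∀ g : Γ, ∃ (k : ℤ) (a : Γ), a ∈ A ∧ g = t ^ k * a := by
    intro g
    have hg : g ∈ Subgroup.closure ((A : Set Γ) ∪ {t}) := by
      rw [hclosure]; exact Subgroup.mem_top g
    induction hg using Subgroup.closure_induction with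
    | mem x hx =>
      rcases hx with hx | hx
      · exact ⟨0, x, hx, by simp⟩
      · rcases hx with rfl
        exact ⟨1, 1, one_mem A, by group⟩
    | one => exact ⟨0, 1, one_mem A, by simp⟩
    | mul x y hx hy ihx ihy =>
      obtain ⟨k, a, ha, rfl⟩ := ihx
      obtain ⟨m, b, hb, rfl⟩ := ihy
      exact ⟨k + m, (t ^ (-m) * a * t ^ m) * b,
        mul_mem (conjz m a ha) hb, by group⟩
    | inv x hx ihx =>
      obtain ⟨k, a, ha, rfl⟩ := ihx
      have h1 := conjz (-k) a⁻¹ (inv_mem ha)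
      rw [neg_neg] at h1
      exact ⟨-k, t ^ k * a⁻¹ * t ^ (-k), h1, by group⟩
  -- conjugation by t^(q*n) is conjugation by a₀^q
  have hinner' : ∀ a ∈ A, t ^ (-(n:ℤ)) * a * t ^ (n:ℤ) = a₀ * a * a₀⁻¹ := by
    intro a ha
    have := hinner a ha
    rw [show t ^ (-(n:ℤ)) * a * t ^ (n:ℤ) = (t ^ n)⁻¹ * a * t ^ n by
      rw [← zpow_natCast t n]; group]
    exact this
  have hinnerInv : ∀ a ∈ A, t ^ (n:ℤ) * a * t ^ (-(n:ℤ)) = a₀⁻¹ * a * a₀ := by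
    intro a ha
    have h1 := hinner' (a₀⁻¹ * a * a₀) (mul_mem (mul_mem (inv_mem ha₀) ha) ha₀)
    have h2 : a₀ * (a₀⁻¹ * a * a₀) * a₀⁻¹ = a := by group
    rw [h2] at h1
    calc t ^ (n:ℤ) * a * t ^ (-(n:ℤ))
        = t ^ (n:ℤ) * (t ^ (-(n:ℤ)) * (a₀⁻¹ * a * a₀) * t ^ (n:ℤ)) * t ^ (-(n:ℤ)) := by
          rw [h1]
      _ = a₀⁻¹ * a * a₀ := by group
  have czq : ∀ (q : ℤ) (a : Γ), a ∈ A →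
      t ^ (-(q * (n:ℤ))) * a * t ^ (q * (n:ℤ)) = a₀ ^ q * a * a₀ ^ (-q) := by
    intro q
    induction q using Int.induction_on with
    | zero => intro a ha; simp
    | succ k ih =>
      intro a ha
      have hmem : a₀ ^ (k:ℤ) * a * a₀ ^ (-(k:ℤ)) ∈ A :=
        mul_mem (mul_mem (Subgroup.zpow_mem A ha₀ _) ha) (Subgroup.zpow_mem A ha₀ _)
      have h1 := hinner' _ hmem
      rw [← ih a ha] at h1
      calc t ^ (-(((k:ℤ)+1) * (n:ℤ))) * a * t ^ (((k:ℤ)+1) * (n:ℤ))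
          = t ^ (-(n:ℤ)) * (t ^ (-((k:ℤ) * (n:ℤ))) * a * t ^ ((k:ℤ) * (n:ℤ))) * t ^ (n:ℤ) := by
            group
        _ = a₀ * (a₀ ^ (k:ℤ) * a * a₀ ^ (-(k:ℤ))) * a₀⁻¹ := by
            rw [h1, ih a ha]
        _ = a₀ ^ ((k:ℤ)+1) * a * a₀ ^ (-((k:ℤ)+1)) := by group
    | pred k ih =>
      intro a ha
      have hmem : a₀ ^ (-(k:ℤ)) * a * a₀ ^ (k:ℤ) ∈ A :=
        mul_mem (mul_mem (Subgroup.zpow_mem A ha₀ _) ha) (Subgroup.zpow_mem A ha₀ _)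
      have h1 := hinnerInv _ hmem
      have h2 : a₀ ^ (-(-(k:ℤ))) = a₀ ^ (k:ℤ) := by rw [neg_neg]
      calc t ^ (-((-(k:ℤ)-1) * (n:ℤ))) * a * t ^ ((-(k:ℤ)-1) * (n:ℤ))
          = t ^ (n:ℤ) * (t ^ (-(-(k:ℤ) * (n:ℤ))) * a * t ^ (-(k:ℤ) * (n:ℤ))) * t ^ (-(n:ℤ)) := by
            group
        _ = t ^ (n:ℤ) * (a₀ ^ (-(k:ℤ)) * a * a₀ ^ (k:ℤ)) * t ^ (-(n:ℤ)) := by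
            rw [ih a ha, h2]
        _ = a₀⁻¹ * (a₀ ^ (-(k:ℤ)) * a * a₀ ^ (k:ℤ)) * a₀ := h1
        _ = a₀ ^ (-(k:ℤ)-1) * a * a₀ ^ (-(-(k:ℤ)-1)) := by group
  ext g
  simp only [SetLike.mem_coe, Subgroup.mem_center_iff, Set.mem_setOf_eq]
  constructor
  · -- center ⊆ union
    intro hg
    obtain ⟨k, a, ha, rfl⟩ := decomp g
    -- commuting with t gives t⁻¹ a t = a
    have hta : t * a = a * t := by
      have h1 := hg t
      have : t ^ k * (t * a) = t ^ k * (a * t) := by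
        calc t ^ k * (t * a) = t * (t ^ k * a) := by group
          _ = t ^ k * a * t := h1
          _ = t ^ k * (a * t) := by group
      exact mul_left_cancel this
    have hfix : t⁻¹ * a * t = a := by rw [mul_assoc, ← hta]; group
    -- commuting with A gives conjugation identity
    have key : ∀ b ∈ A, t ^ (-k) * b * t ^ k = a * b * a⁻¹ := by
      intro b hb
      have h1 := hg b
      have h3 : (t ^ (-k) * b * t ^ k) * a = a * b := by
        calc (t ^ (-k) * b * t ^ k) * a = t ^ (-k) * (b * (t ^ k * a)) := by group
          _ = t ^ (-k) * (t ^ k * a * b) := by rw [h1]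
          _ = a * b := by group
      rw [← h3]; group
    set q : ℤ := k / (n:ℤ) with hqdef
    set r : ℤ := k % (n:ℤ) with hrdef
    have hk2 : (n:ℤ) * q + r = k := Int.mul_ediv_add_emod k n
    have hr0 : 0 ≤ r := Int.emod_nonneg k (by exact_mod_cast hn.ne')
    have hrn : r < (n:ℤ) := Int.emod_lt_of_pos k (by exact_mod_cast hn)
    by_cases hr : r = 0
    · -- k = q * n
      have hk : k = q * (n:ℤ) := by rw [← hk2, hr]; ring
      have hq : ∀ c ∈ A, a₀ ^ q * c * a₀ ^ (-q) = a * c * a⁻¹ := by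
        intro c hc
        have e := key c hc
        rw [hk] at e
        exact (czq q c hc).symm.trans e
      refine ⟨q, a, ⟨ha, hfix⟩, ⟨a₀ ^ (-q) * a,
        mul_mem (Subgroup.zpow_mem A ha₀ _) ha, ?_, by group⟩, by rw [hk]⟩
      intro c hc
      have e := hq c hc
      calc a₀ ^ (-q) * a * c = a₀ ^ (-q) * (a * c * a⁻¹) * a := by group
        _ = a₀ ^ (-q) * (a₀ ^ q * c * a₀ ^ (-q)) * a := by rw [e]
        _ = c * (a₀ ^ (-q) * a) := by group
    · -- contradiction with minimality
      exfalso
      set m : ℕ := r.toNat with hmdef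
      have hmr : (m : ℤ) = r := Int.toNat_of_nonneg hr0
      have hm1 : 0 < m := by omega
      have hm2 : m < n := by omega
      apply hmin m hm1 hm2
      set u : Γ := t ^ (-r) * a₀ * t ^ r with hudef
      have hu : u ∈ A := conjz r a₀ ha₀
      refine ⟨u ^ (-q) * a, mul_mem (Subgroup.zpow_mem A hu _) ha, ?_⟩
      intro c hc
      have e := key c hc
      rw [← hk2] at e
      have huq : ∀ j : ℤ, u ^ j = t ^ (-r) * a₀ ^ j * t ^ r := by
        intro j
        have : u = t ^ (-r) * a₀ * (t ^ (-r))⁻¹ := by rw [hudef]; group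
        rw [this, conj_zpow]
        group
      have e2 : u ^ q * (t ^ (-r) * c * t ^ r) * u ^ (-q) = a * c * a⁻¹ := by
        calc u ^ q * (t ^ (-r) * c * t ^ r) * u ^ (-q)
            = t ^ (-r) * (a₀ ^ q * c * a₀ ^ (-q)) * t ^ r := by
              rw [huq q, huq (-q)]; group
          _ = t ^ (-r) * (t ^ (-(q * (n:ℤ))) * c * t ^ (q * (n:ℤ))) * t ^ r := by
              rw [czq q c hc]
          _ = t ^ (-((n:ℤ) * q + r)) * c * t ^ ((n:ℤ) * q + r) := by group
          _ = a * c * a⁻¹ := e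
      have e3 : t ^ (-r) * c * t ^ r = u ^ (-q) * (a * c * a⁻¹) * u ^ q := by
        rw [← e2]; group
      rw [show (t ^ m)⁻¹ * c * t ^ m = t ^ (-r) * c * t ^ r by
        rw [← zpow_natCast t m, hmr]; group]
      rw [e3]; group
  · -- union ⊆ center
    rintro ⟨p, x, ⟨hx, hfix⟩, ⟨z, hz, hzc, rfl⟩, rfl⟩
    intro g
    obtain ⟨k, b, hb, rfl⟩ := decomp g
    have hxt : (a₀ ^ p * z) * t = t * (a₀ ^ p * z) := by
      calc (a₀ ^ p * z) * t = t * (t⁻¹ * (a₀ ^ p * z) * t) := by group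
        _ = t * (a₀ ^ p * z) := by rw [hfix]
    have hcomm : ∀ j : ℤ, (a₀ ^ p * z) * t ^ j = t ^ j * (a₀ ^ p * z) := by
      intro j
      exact ((Commute.zpow_right (a := a₀ ^ p * z) (b := t) hxt j)).eq
    have hbz : (a₀ ^ p * b * a₀ ^ (-p)) * (a₀ ^ p * z) = (a₀ ^ p * z) * b := by
      calc (a₀ ^ p * b * a₀ ^ (-p)) * (a₀ ^ p * z) = a₀ ^ p * (b * z) := by group
        _ = a₀ ^ p * (z * b) := by rw [hzc b hb]
        _ = (a₀ ^ p * z) * b := by group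
    calc t ^ k * b * (t ^ (p * (n:ℤ)) * (a₀ ^ p * z))
        = t ^ k * t ^ (p * (n:ℤ)) * ((t ^ (-(p * (n:ℤ))) * b * t ^ (p * (n:ℤ))) * (a₀ ^ p * z)) := by
          group
      _ = t ^ k * t ^ (p * (n:ℤ)) * ((a₀ ^ p * b * a₀ ^ (-p)) * (a₀ ^ p * z)) := by
          rw [czq p b hb]
      _ = t ^ k * t ^ (p * (n:ℤ)) * ((a₀ ^ p * z) * b) := by rw [hbz]
      _ = t ^ (p * (n:ℤ)) * ((t ^ k * (a₀ ^ p * z)) * b) := by group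
      _ = t ^ (p * (n:ℤ)) * (((a₀ ^ p * z) * t ^ k) * b) := by rw [← hcomm k]
      _ = t ^ (p * (n:ℤ)) * (a₀ ^ p * z) * (t ^ k * b) := by group


/-- The subgroup `C_ε` : `C_{+1} = Cp` when `ε = 1`, and `C_{-1} = Cm`
otherwise. -/
def toCsub (Cm Cp : Subgroup Γ) (ε : ℤ) : Subgroup Γ := if ε = 1 then Cp else Cm

/-- The pair `(g₀, [(ε₁, g₁), …, (εₙ, gₙ)])` encodes the word
`g₀ t^{ε₁} g₁ ⋯ t^{εₙ} gₙ`; it is reduced when all `gᵢ ∈ A`, all `εᵢ = ±1`,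
and it contains no pinch `t^{εᵢ} gᵢ t^{-εᵢ}` with `gᵢ ∈ C_{εᵢ}`. -/
def HNNReducedWord (A Cm Cp : Subgroup Γ) (g₀ : Γ) (w : List (ℤ × Γ)) : Prop :=
  g₀ ∈ A ∧ (∀ p ∈ w, (p.1 = 1 ∨ p.1 = -1) ∧ p.2 ∈ A) ∧
    w.Chain' fun p q => q.1 = -p.1 → p.2 ∉ toCsub Cm Cp p.1

/-- The element of `Γ` represented by the word
`g₀ t^{ε₁} g₁ ⋯ t^{εₙ} gₙ`. -/
def hnnProd (t g₀ : Γ) (w : List (ℤ × Γ)) : Γ :=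
  g₀ * (w.map fun p => t ^ p.1 * p.2).prod

/-- `Γ` is the HNN extension of its subgroup `A` relative to the isomorphism
`φ : Cm → Cp`, `φ(c) = t⁻¹ c t`, with stable letter `t`. -/
def IsHNN (A Cm Cp : Subgroup Γ) (t : Γ) : Prop :=
  Cm ≤ A ∧ Cp ≤ A ∧ (∀ c : Γ, c ∈ Cm ↔ t⁻¹ * c * t ∈ Cp) ∧
    Subgroup.closure ((A : Set Γ) ∪ {t}) = ⊤ ∧
    ∀ g₀ w, HNNReducedWord A Cm Cp g₀ w → w ≠ [] → hnnProd t g₀ w ≠ 1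

/-- `g` is cyclically reduced: `g ∈ A` (length 1), or `g` has a reduced form
`g₁ t^{ε₁} g₂ ⋯ gₙ t^{εₙ} gₙ₊₁` with `gₙ₊₁ = 1` and either `n = 1` or
`t^{εₙ} g₁ t^{ε₁}` is not a pinch. -/
def HNNCyclicallyReduced (A Cm Cp : Subgroup Γ) (t g : Γ) : Prop :=
  g ∈ A ∨
    ∃ g₀ w, HNNReducedWord A Cm Cp g₀ w ∧ hnnProd t g₀ w = g ∧
      ∃ p q, w.head? = some q ∧ w.getLast? = some p ∧ p.2 = 1 ∧
        (w.length = 1 ∨ ¬(q.1 = -p.1 ∧ g₀ ∈ toCsub Cm Cp p.1))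

/-- Center of an HNN extension, case (iii): if `C_{-1} = C_{+1} = A` (so
`φ : a ↦ t⁻¹ a t` is an automorphism of `A`) and `φ` has order exactly `n` in
`Out(A)`, with `φⁿ = conjugation by a₀ ∈ A`, then the center of `Γ` is
`⋃_{p ∈ ℤ} t^{pn} · (Fix φ ∩ a₀^p Z(A))`. -/
theorem hnn_center_finite_order (A Cm Cp : Subgroup Γ) (t : Γ)
    (hH : IsHNN A Cm Cp t) (hCm : Cm = A) (hCp : Cp = A)
    (n : ℕ) (hn : 0 < n) (a₀ : Γ) (ha₀ : a₀ ∈ A)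
    (hinner : ∀ a ∈ A, (t ^ n)⁻¹ * a * t ^ n = a₀ * a * a₀⁻¹)
    (hmin : ∀ m : ℕ, 0 < m → m < n →
      ¬∃ b ∈ A, ∀ a ∈ A, (t ^ m)⁻¹ * a * t ^ m = b * a * b⁻¹) :
    (Subgroup.center Γ : Set Γ) =
      {g : Γ | ∃ p : ℤ, ∃ x : Γ,
        (x ∈ A ∧ t⁻¹ * x * t = x) ∧
        (∃ z : Γ, z ∈ A ∧ (∀ a ∈ A, z * a = a * z) ∧ x = a₀ ^ p * z) ∧
        g = t ^ (p * (n : ℤ)) * x} := by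
  obtain ⟨-, -, hconj, hclosure, -⟩ := hH
  rw [hCm, hCp] at hconj
  exact hnn_center_aux A t hconj hclosure n hn a₀ ha₀ hinner hmin
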